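/- Let d ≥ 2 and let μ be the Haar probability measure on the unitary group U(d). Then for all A, B, C, D ∈ M_d(ℂ), ∫_{U(d)} Tr[W A W† B]·Tr[W C W† D] dμ(W) = (1/(d²−1))·(Tr[AC]·Tr[BD] + Tr[A]·Tr[B]·Tr[C]·Tr[D]) − (1/(d(d²−1)))·(Tr[A]·Tr[C]·Tr[BD] + Tr[AC]·Tr[B]·Tr[D]). -/

import Mathlib

open MeasureTheory Matrix

/-- The space of `m × n` complex matrices carries the (product) measurable structure. -/
noncomputable instance {m n : Type*} : MeasurableSpace (Matrix m n ℂ) :=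
  (inferInstance : MeasurableSpace (m → n → ℂ))

open scoped Kronecker

instance {m n : Type*} [Countable m] [Countable n] : BorelSpace (Matrix m n ℂ) :=
  inferInstanceAs (BorelSpace (m → n → ℂ))

namespace Hm2


variable {d : ℕ}

/-- permutation matrix -/
def permM {ι : Type*} [DecidableEq ι] (π : Equiv.Perm ι) : Matrix ι ι ℂ :=
  Matrix.of fun p q => if p = π q then 1 else 0

theorem permM_mul {ι : Type*} [Fintype ι] [DecidableEq ι] (π : Equiv.Perm ι)
    (T : Matrix ι ι ℂ) (p q : ι) : (permM π * T) p q = T (π.symm p) q := by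
  simp only [Matrix.mul_apply, permM, Matrix.of_apply, ite_mul, one_mul, zero_mul]
  simp_rw [← Equiv.symm_apply_eq]
  simp

theorem mul_permM {ι : Type*} [Fintype ι] [DecidableEq ι] (π : Equiv.Perm ι)
    (T : Matrix ι ι ℂ) (p q : ι) : (T * permM π) p q = T p (π q) := by
  simp only [Matrix.mul_apply, permM, Matrix.of_apply, mul_ite, mul_one, mul_zero]
  simp

theorem star_permM {ι : Type*} [Fintype ι] [DecidableEq ι] (π : Equiv.Perm ι) :
    star (permM π) = permM π⁻¹ := by
  ext p q
  simp only [Matrix.star_apply, permM, Matrix.of_apply]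
  by_cases h : q = π p
  · have h2 : p = π⁻¹ q := by rw [h]; simp
    rw [if_pos h, if_pos h2, star_one]
  · have h2 : ¬ p = π⁻¹ q := fun hc => h (by rw [hc]; simp)
    rw [if_neg h, if_neg h2, star_zero]

theorem permM_mul_permM {ι : Type*} [Fintype ι] [DecidableEq ι] (π τ : Equiv.Perm ι) :
    permM π * permM τ = permM (π * τ) := by
  ext p q
  rw [mul_permM]
  simp only [permM, Matrix.of_apply]
  congr 1

theorem permM_one {ι : Type*} [Fintype ι] [DecidableEq ι] :
    permM (1 : Equiv.Perm ι) = 1 := by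
  ext p q
  simp [permM, Matrix.one_apply, eq_comm]
  split_ifs <;> simp_all

theorem permM_mem (σ : Equiv.Perm (Fin d)) : permM σ ∈ Matrix.unitaryGroup (Fin d) ℂ := by
  rw [Matrix.mem_unitaryGroup_iff]
  rw [star_permM, permM_mul_permM, mul_inv_cancel, permM_one]

theorem kron_permM (σ : Equiv.Perm (Fin d)) :
    (permM σ ⊗ₖ permM σ) = permM (Equiv.prodCongr σ σ) := by
  ext ⟨i, j⟩ ⟨k, l⟩
  simp only [Matrix.kroneckerMap_apply, permM, Matrix.of_apply, Equiv.prodCongr_apply,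
    Prod.mk.injEq, Prod.map]
  split_ifs <;> simp_all

/-- the swap (flip) matrix -/
def FM (d : ℕ) : Matrix (Fin d × Fin d) (Fin d × Fin d) ℂ :=
  permM (Equiv.prodComm (Fin d) (Fin d))

theorem FM_mul_kron (A B : Matrix (Fin d) (Fin d) ℂ) :
    FM d * (A ⊗ₖ B) = (B ⊗ₖ A) * FM d := by
  ext p q
  rw [FM, permM_mul, mul_permM]
  simp [Matrix.kroneckerMap_apply, mul_comm]

theorem FM_mul_FM : FM d * FM d = 1 := by
  ext p q
  rw [FM, permM_mul]
  simp [permM, Matrix.one_apply, Prod.ext_iff, and_comm]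

theorem trace_FM : (FM d).trace = (d : ℂ) := by
  classical
  have h : ∀ p : Fin d × Fin d, (FM d).diag p = if p.1 = p.2 then (1:ℂ) else 0 := by
    rintro ⟨i, j⟩
    by_cases h : i = j <;> simp [Matrix.diag, FM, permM, Equiv.prodComm, Prod.ext_iff, h]
  rw [Matrix.trace]
  simp_rw [h]
  rw [Fintype.sum_prod_type]
  simp [Finset.sum_ite_eq]

theorem trace_FM_mul (B D : Matrix (Fin d) (Fin d) ℂ) :
    (FM d * (B ⊗ₖ D)).trace = (B * D).trace := by
  simp only [Matrix.trace, Matrix.diag]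
  have h : ∀ p : Fin d × Fin d, (FM d * (B ⊗ₖ D)) p p = B p.2 p.1 * D p.1 p.2 := by
    intro p
    rw [FM, permM_mul]
    simp [Matrix.kroneckerMap_apply]
  simp_rw [h]
  rw [Fintype.sum_prod_type]
  rw [Finset.sum_comm]
  simp [Matrix.mul_apply]

theorem trace_one_K : (1 : Matrix (Fin d × Fin d) (Fin d × Fin d) ℂ).trace = (d : ℂ)^2 := by
  simp [Matrix.trace_one]
  ring


variable {d : ℕ}

theorem entry_zero (T : Matrix (Fin d × Fin d) (Fin d × Fin d) ℂ)
    (hcomm : ∀ V : Matrix.unitaryGroup (Fin d) ℂ,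
      ((V : Matrix (Fin d) (Fin d) ℂ) ⊗ₖ (V : Matrix (Fin d) (Fin d) ℂ)) * T
        = T * ((V : Matrix (Fin d) (Fin d) ℂ) ⊗ₖ (V : Matrix (Fin d) (Fin d) ℂ)))
    {i j k l : Fin d} (h : ¬((i = k ∧ j = l) ∨ (i = l ∧ j = k))) :
    T (i, j) (k, l) = 0 := by
  classical
  -- find a separating index m
  have hsets : ({i, j} : Set (Fin d)) ≠ {k, l} := fun hs => h (Set.pair_eq_pair_iff.mp hs)
  have hex : ∃ m : Fin d, ((m = i ∨ m = j) ∧ ¬(m = k ∨ m = l))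
      ∨ ((m = k ∨ m = l) ∧ ¬(m = i ∨ m = j)) := by
    by_contra hc
    push_neg at hc
    apply hsets
    ext m
    have h1 := (hc m).1
    have h2 := (hc m).2
    simp only [Set.mem_insert_iff, Set.mem_singleton_iff]
    tauto
  obtain ⟨m, hm⟩ := hex
  set z : Fin d → ℂ := fun x => if x = m then Complex.I else 1 with hz
  have hmem : Matrix.diagonal z ∈ Matrix.unitaryGroup (Fin d) ℂ := by
    rw [Matrix.mem_unitaryGroup_iff]
    rw [Matrix.star_eq_conjTranspose, Matrix.diagonal_conjTranspose,
      Matrix.diagonal_mul_diagonal]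
    have hfun : (fun x => z x * star z x) = fun _ => (1:ℂ) := by
      funext x
      simp only [hz]
      split_ifs with hx <;> simp [hx, Complex.conj_I, Complex.I_mul_I]
    rw [hfun, Matrix.diagonal_one]
  have hVc : ((⟨Matrix.diagonal z, hmem⟩ : Matrix.unitaryGroup (Fin d) ℂ)
      : Matrix (Fin d) (Fin d) ℂ) = Matrix.diagonal z := rfl
  have hC := hcomm ⟨Matrix.diagonal z, hmem⟩
  rw [hVc, Matrix.diagonal_kronecker_diagonal] at hC
  have hent := congrFun (congrFun hC (i, j)) (k, l)
  rw [Matrix.diagonal_mul, Matrix.mul_diagonal] at hent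
  -- hent : z i * z j * T (i,j) (k,l) = T (i,j) (k,l) * (z k * z l)
  have hkey : ∀ x y : Fin d, (x = m ∨ y = m) → z x * z y ≠ 1 := by
    intro x y hxy
    simp only [hz]
    rcases hxy with hx | hy
    · rw [if_pos hx]
      split_ifs
      · rw [Complex.I_mul_I]; norm_num
      · rw [mul_one]; simp [Complex.ext_iff]
    · rw [if_pos hy]
      split_ifs
      · rw [Complex.I_mul_I]; norm_num
      · rw [one_mul]; simp [Complex.ext_iff]
  have hone : ∀ x y : Fin d, (¬ x = m ∧ ¬ y = m) → z x * z y = 1 := by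
    intro x y ⟨hx, hy⟩
    simp only [hz, if_neg hx, if_neg hy, mul_one]
  have hne : z i * z j ≠ z k * z l := by
    rcases hm with ⟨hin, hout⟩ | ⟨hin, hout⟩
    · push_neg at hout
      rw [hone k l ⟨fun hc => hout.1 hc.symm, fun hc => hout.2 hc.symm⟩]
      exact hkey i j (by rcases hin with h' | h' <;> [left; right] <;> exact h'.symm)
    · push_neg at hout
      rw [hone i j ⟨fun hc => hout.1 hc.symm, fun hc => hout.2 hc.symm⟩]
      intro hc
      exact hkey k l (by rcases hin with h' | h' <;> [left; right] <;> exact h'.symm) hc.symm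
  have : (z i * z j - z k * z l) * T (i, j) (k, l) = 0 := by
    rw [sub_mul, hent]
    ring
  rcases mul_eq_zero.mp this with h0 | h0
  · exact absurd (sub_eq_zero.mp h0) hne
  · exact h0


theorem entry_perm (T : Matrix (Fin d × Fin d) (Fin d × Fin d) ℂ)
    (hcomm : ∀ V : Matrix.unitaryGroup (Fin d) ℂ,
      ((V : Matrix (Fin d) (Fin d) ℂ) ⊗ₖ (V : Matrix (Fin d) (Fin d) ℂ)) * T
        = T * ((V : Matrix (Fin d) (Fin d) ℂ) ⊗ₖ (V : Matrix (Fin d) (Fin d) ℂ)))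
    (σ : Equiv.Perm (Fin d)) (p q : Fin d × Fin d) :
    T (σ p.1, σ p.2) (σ q.1, σ q.2) = T p q := by
  have hC := hcomm ⟨permM σ, permM_mem σ⟩
  rw [show ((⟨permM σ, permM_mem σ⟩ : Matrix.unitaryGroup (Fin d) ℂ)
      : Matrix (Fin d) (Fin d) ℂ) = permM σ from rfl, kron_permM] at hC
  have hent := congrFun (congrFun hC (σ p.1, σ p.2)) q
  rw [permM_mul, mul_permM] at hent
  have e1 : (Equiv.prodCongr σ σ).symm (σ p.1, σ p.2) = p := by
    rw [Equiv.symm_apply_eq]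
    rfl
  have e2 : (Equiv.prodCongr σ σ) q = (σ q.1, σ q.2) := rfl
  rw [e1, e2] at hent
  exact hent.symm

/-- existence of a permutation sending two given distinct points to two others -/
theorem exists_perm (z0 z1 : Fin d) (hz : z0 ≠ z1) {i j : Fin d} (hij : i ≠ j) :
    ∃ σ : Equiv.Perm (Fin d), σ z0 = i ∧ σ z1 = j := by
  classical
  set σ₁ := Equiv.swap z0 i with hσ₁
  have h1 : σ₁ z0 = i := Equiv.swap_apply_left _ _
  have h2 : σ₁ z1 ≠ i := by
    rw [← h1]
    exact fun hc => hz.symm (σ₁.injective hc)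
  set σ₂ := Equiv.swap (σ₁ z1) j with hσ₂
  refine ⟨σ₁.trans σ₂, ?_, ?_⟩
  · show σ₂ (σ₁ z0) = i
    rw [h1, hσ₂]
    rw [Equiv.swap_apply_of_ne_of_ne h2.symm hij]
  · show σ₂ (σ₁ z1) = j
    exact Equiv.swap_apply_left _ _


theorem sum_ind_zero (z0 z1 a b : Fin d) (h : a = z0 ∨ a = z1 ∨ ¬ a = b) :
    (∑ k, if k = z0 ∨ k = z1 then (0:ℂ) else if k = a ∧ k = b then 1 else 0) = 0 := by
  apply Finset.sum_eq_zero
  intro k _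
  by_cases h1 : k = z0 ∨ k = z1
  · rw [if_pos h1]
  · rw [if_neg h1, if_neg ?_]
    rintro ⟨hka, hkb⟩
    rcases h with h | h | h
    · exact h1 (Or.inl (hka.trans h))
    · exact h1 (Or.inr (hka.trans h))
    · exact h (hka.symm.trans hkb)

theorem sum_ind_one (z0 z1 a : Fin d) (h0 : ¬ a = z0) (h1 : ¬ a = z1) :
    (∑ k, if k = z0 ∨ k = z1 then (0:ℂ) else if k = a ∧ k = a then 1 else 0) = 1 := by
  have he : ∀ k : Fin d, (if k = z0 ∨ k = z1 then (0:ℂ) else if k = a ∧ k = a then 1 else 0)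
      = if k = a then 1 else 0 := by
    intro k
    by_cases hk : k = a
    · rw [if_neg ?hne, if_pos ⟨hk, hk⟩, if_pos hk]
      case hne =>
        rintro (h' | h')
        · exact h0 (hk.symm.trans h')
        · exact h1 (hk.symm.trans h')
    · by_cases h2 : k = z0 ∨ k = z1
      · rw [if_pos h2, if_neg hk]
      · rw [if_neg h2, if_neg (fun hh : _ ∧ _ => hk hh.1), if_neg hk]
  rw [Finset.sum_congr rfl fun k _ => he k, Finset.sum_ite_eq' Finset.univ a]
  simp

/-- a real rotation by angle `arctan(4/3)` in the `z0,z1`-plane -/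
noncomputable def rotM (d : ℕ) (z0 z1 : Fin d) : Matrix (Fin d) (Fin d) ℂ :=
  Matrix.of fun k j =>
    if k = z0 then (if j = z0 then 3/5 else if j = z1 then 4/5 else 0)
    else if k = z1 then (if j = z0 then -(4/5) else if j = z1 then 3/5 else 0)
    else (if k = j then 1 else 0)

theorem rotM_mem (z0 z1 : Fin d) (hz : z0 ≠ z1) :
    rotM d z0 z1 ∈ Matrix.unitaryGroup (Fin d) ℂ := by
  classical
  rw [Matrix.mem_unitaryGroup_iff']
  ext i j
  rw [Matrix.mul_apply]
  have hfun : ∀ k, (star (rotM d z0 z1)) i k * rotM d z0 z1 k j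
      = (if k = z0 then star (rotM d z0 z1 z0 i) * rotM d z0 z1 z0 j else 0)
      + (if k = z1 then star (rotM d z0 z1 z1 i) * rotM d z0 z1 z1 j else 0)
      + (if k = z0 ∨ k = z1 then 0 else (if k = i ∧ k = j then 1 else 0)) := by
    intro k
    rw [Matrix.star_eq_conjTranspose, Matrix.conjTranspose_apply]
    by_cases h0 : k = z0
    · subst h0
      simp [hz]
    · by_cases h1 : k = z1
      · subst h1
        simp [h0, hz]
      · simp only [if_neg h0, if_neg h1, h0, h1, or_self, if_false, zero_add]
        have hki : rotM d z0 z1 k i = if k = i then 1 else 0 := by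
          simp [rotM, h0, h1]
        have hkj : rotM d z0 z1 k j = if k = j then 1 else 0 := by
          simp [rotM, h0, h1]
        rw [hki, hkj]
        by_cases h4 : k = i <;> by_cases h5 : k = j <;> simp [h4, h5]
  rw [Finset.sum_congr rfl (fun k _ => hfun k)]
  rw [Finset.sum_add_distrib, Finset.sum_add_distrib]
  rw [Finset.sum_ite_eq' Finset.univ z0, Finset.sum_ite_eq' Finset.univ z1]
  simp only [Finset.mem_univ, if_true]
  have hr00 : rotM d z0 z1 z0 z0 = 3/5 := by simp [rotM]
  have hr01 : rotM d z0 z1 z0 z1 = 4/5 := by simp [rotM, hz.symm]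
  have hr10 : rotM d z0 z1 z1 z0 = -(4/5) := by simp [rotM, hz.symm, hz]
  have hr11 : rotM d z0 z1 z1 z1 = 3/5 := by simp [rotM, hz.symm]
  have hr0 : ∀ x, x ≠ z0 → x ≠ z1 → rotM d z0 z1 z0 x = 0 := by
    intro x hx0 hx1; simp [rotM, hx0, hx1]
  have hr1 : ∀ x, x ≠ z0 → x ≠ z1 → rotM d z0 z1 z1 x = 0 := by
    intro x hx0 hx1; simp [rotM, hz.symm, hx0, hx1]
  have hnum : ∀ (u v x y : ℂ), u = x → v = y → u * v = x * y := by
    intro u v x y hu hv; rw [hu, hv]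
  by_cases hi0 : i = z0
  · rw [hi0]
    by_cases hj0 : j = z0
    · rw [hj0]
      have hS := sum_ind_zero z0 z1 z0 z0 (Or.inl rfl)
      rw [hS, hr00, hr10]
      norm_num [Matrix.one_apply, Complex.star_def, map_div₀, map_neg, map_ofNat]
    · by_cases hj1 : j = z1
      · rw [hj1]
        have hS := sum_ind_zero z0 z1 z0 z1 (Or.inl rfl)
        rw [hS, hr00, hr01, hr10, hr11]
        norm_num [Matrix.one_apply, hz, Complex.star_def, map_div₀, map_neg, map_ofNat]
      · have hS := sum_ind_zero z0 z1 z0 j (Or.inl rfl)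
        rw [hS, hr00, hr10, hr0 j hj0 hj1, hr1 j hj0 hj1]
        norm_num [Matrix.one_apply, show ¬ z0 = j from fun h => hj0 h.symm]
  · by_cases hi1 : i = z1
    · rw [hi1]
      by_cases hj0 : j = z0
      · rw [hj0]
        have hS := sum_ind_zero z0 z1 z1 z0 (Or.inr (Or.inl rfl))
        rw [hS, hr00, hr01, hr10, hr11]
        norm_num [Matrix.one_apply, hz.symm, Complex.star_def, map_div₀, map_neg, map_ofNat]
      · by_cases hj1 : j = z1
        · rw [hj1]
          have hS := sum_ind_zero z0 z1 z1 z1 (Or.inr (Or.inl rfl))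
          rw [hS, hr01, hr11]
          norm_num [Matrix.one_apply, Complex.star_def, map_div₀, map_neg, map_ofNat]
        · have hS := sum_ind_zero z0 z1 z1 j (Or.inr (Or.inl rfl))
          rw [hS, hr01, hr11, hr0 j hj0 hj1, hr1 j hj0 hj1]
          norm_num [Matrix.one_apply, show ¬ z1 = j from fun h => hj1 h.symm]
    · rw [hr0 i hi0 hi1, hr1 i hi0 hi1]
      by_cases hij : i = j
      · rw [← hij]
        have hS := sum_ind_one z0 z1 i hi0 hi1
        rw [hS]
        norm_num [Matrix.one_apply, hij]
      · have hS := sum_ind_zero z0 z1 i j (Or.inr (Or.inr hij))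
        rw [hS]
        norm_num [Matrix.one_apply, hij]

theorem FM_apply (i j k l : Fin d) :
    FM d (i, j) (k, l) = if i = l ∧ j = k then 1 else 0 := by
  simp [FM, permM, Prod.ext_iff]

theorem one_K_apply (i j k l : Fin d) :
    (1 : Matrix (Fin d × Fin d) (Fin d × Fin d) ℂ) (i, j) (k, l)
      = if i = k ∧ j = l then 1 else 0 := by
  simp [Matrix.one_apply, Prod.ext_iff]

theorem structure_thm (hd : 2 ≤ d) (T : Matrix (Fin d × Fin d) (Fin d × Fin d) ℂ)
    (hcomm : ∀ V : Matrix.unitaryGroup (Fin d) ℂ,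
      ((V : Matrix (Fin d) (Fin d) ℂ) ⊗ₖ (V : Matrix (Fin d) (Fin d) ℂ)) * T
        = T * ((V : Matrix (Fin d) (Fin d) ℂ) ⊗ₖ (V : Matrix (Fin d) (Fin d) ℂ))) :
    T = T (⟨0, by omega⟩, ⟨1, by omega⟩) (⟨0, by omega⟩, ⟨1, by omega⟩) • 1
      + T (⟨1, by omega⟩, ⟨0, by omega⟩) (⟨0, by omega⟩, ⟨1, by omega⟩) • FM d := by
  have h0 : 0 < d := by omega
  have h1 : 1 < d := by omega
  set z0 : Fin d := ⟨0, h0⟩ with hz0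
  set z1 : Fin d := ⟨1, h1⟩ with hz1
  have hz : z0 ≠ z1 := by simp [hz0, hz1, Fin.ext_iff]
  set a : ℂ := T (z0, z1) (z0, z1) with ha
  set b : ℂ := T (z1, z0) (z0, z1) with hb
  -- rotation relation
  have hrot : T (z0, z0) (z0, z0) = a + b := by
    have hC := hcomm ⟨rotM d z0 z1, rotM_mem z0 z1 hz⟩
    rw [show ((⟨rotM d z0 z1, rotM_mem z0 z1 hz⟩ : Matrix.unitaryGroup (Fin d) ℂ)
        : Matrix (Fin d) (Fin d) ℂ) = rotM d z0 z1 from rfl] at hC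
    have hent := congrFun (congrFun hC (z0, z0)) (z0, z1)
    rw [Matrix.mul_apply, Matrix.mul_apply] at hent
    have hL : (∑ r, (rotM d z0 z1 ⊗ₖ rotM d z0 z1) (z0, z0) r * T r (z0, z1))
        = (rotM d z0 z1 ⊗ₖ rotM d z0 z1) (z0, z0) (z0, z1) * T (z0, z1) (z0, z1)
          + (rotM d z0 z1 ⊗ₖ rotM d z0 z1) (z0, z0) (z1, z0) * T (z1, z0) (z0, z1) := by
      rw [← Finset.sum_subset (Finset.subset_univ ({(z0, z1), (z1, z0)} : Finset _))
        (fun x _ hx => ?_)]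
      · rw [Finset.sum_insert (by simp [Prod.ext_iff, hz]), Finset.sum_singleton]
      · have hT : T x (z0, z1) = 0 := by
          apply entry_zero T hcomm
          intro hcase
          apply hx
          simp only [Finset.mem_insert, Finset.mem_singleton]
          rcases hcase with ⟨hc1, hc2⟩ | ⟨hc1, hc2⟩
          · left; exact Prod.ext hc1 hc2
          · right; exact Prod.ext hc1 hc2
        rw [hT, mul_zero]
    have hR : (∑ r, T (z0, z0) r * (rotM d z0 z1 ⊗ₖ rotM d z0 z1) r (z0, z1))
        = T (z0, z0) (z0, z0) * (rotM d z0 z1 ⊗ₖ rotM d z0 z1) (z0, z0) (z0, z1) := by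
      rw [← Finset.sum_subset (Finset.subset_univ ({(z0, z0)} : Finset _))
        (fun x _ hx => ?_)]
      · rw [Finset.sum_singleton]
      · have hT : T (z0, z0) x = 0 := by
          apply entry_zero T hcomm
          intro hcase
          apply hx
          simp only [Finset.mem_singleton]
          rcases hcase with ⟨hc1, hc2⟩ | ⟨hc1, hc2⟩
          · exact Prod.ext hc1.symm hc2.symm
          · exact Prod.ext hc2.symm hc1.symm
        rw [hT, zero_mul]
    rw [hL, hR] at hent
    have e1 : (rotM d z0 z1 ⊗ₖ rotM d z0 z1) (z0, z0) (z0, z1) = 12/25 := by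
      simp only [Matrix.kroneckerMap_apply]
      rw [show rotM d z0 z1 z0 z0 = 3/5 from by simp [rotM],
        show rotM d z0 z1 z0 z1 = 4/5 from by simp [rotM, hz.symm]]
      norm_num
    have e2 : (rotM d z0 z1 ⊗ₖ rotM d z0 z1) (z0, z0) (z1, z0) = 12/25 := by
      simp only [Matrix.kroneckerMap_apply]
      rw [show rotM d z0 z1 z0 z0 = 3/5 from by simp [rotM],
        show rotM d z0 z1 z0 z1 = 4/5 from by simp [rotM, hz.symm]]
      norm_num
    rw [e1, e2] at hent
    rw [ha, hb]
    linear_combination (-25/12 : ℂ) * hent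
  -- the target entries
  ext ⟨i, j⟩ ⟨k, l⟩
  rw [Matrix.add_apply, Matrix.smul_apply, Matrix.smul_apply, one_K_apply, FM_apply,
    smul_eq_mul, smul_eq_mul]
  by_cases hA : i = k ∧ j = l
  · obtain ⟨hik, hjl⟩ := hA
    by_cases hB : i = l ∧ j = k
    · obtain ⟨hil, hjk⟩ := hB
      have hij : i = j := hik.trans hjk.symm
      rw [if_pos ⟨hik, hjl⟩, if_pos ⟨hil, hjk⟩]
      have eP : T (i, i) (i, i) = T (z0, z0) (z0, z0) := by
        have h' := entry_perm T hcomm (Equiv.swap z0 i) (z0, z0) (z0, z0)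
        rw [Equiv.swap_apply_left] at h'
        exact h'
      rw [← hij, ← hik, ← hil, eP, hrot]
      ring
    · have hij : i ≠ j := fun hc => hB ⟨hc.trans hjl, hc.symm.trans hik⟩
      rw [if_pos ⟨hik, hjl⟩, if_neg hB]
      obtain ⟨σ, hs0, hs1⟩ := exists_perm z0 z1 hz hij
      have := entry_perm T hcomm σ (z0, z1) (z0, z1)
      rw [hs0, hs1] at this
      rw [← hik, ← hjl, this]
      ring
  · by_cases hB : i = l ∧ j = k
    · obtain ⟨hil, hjk⟩ := hB
      have hji : j ≠ i := fun hc => hA ⟨hc.symm.trans hjk, hc.trans hil⟩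
      rw [if_neg hA, if_pos ⟨hil, hjk⟩]
      obtain ⟨σ, hs0, hs1⟩ := exists_perm z0 z1 hz hji
      have h' := entry_perm T hcomm σ (z1, z0) (z0, z1)
      rw [hs0, hs1] at h'
      rw [← hjk, ← hil, h']
      ring
    · rw [if_neg hA, if_neg hB]
      rw [entry_zero T hcomm (fun hc => hc.elim (fun h' => hA h') (fun h' => hB h'))]
      ring

instance instBorelUG : BorelSpace (Matrix.unitaryGroup (Fin d) ℂ) :=
  inferInstanceAs (BorelSpace ((Matrix.unitaryGroup (Fin d) ℂ : Set (Matrix (Fin d) (Fin d) ℂ))))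

theorem isCompact_unitaryGroup (d : ℕ) :
    IsCompact ((Matrix.unitaryGroup (Fin d) ℂ : Set (Matrix (Fin d) (Fin d) ℂ))) := by
  have hS : IsCompact {M : Matrix (Fin d) (Fin d) ℂ | ∀ i j, M i j ∈ Metric.closedBall (0:ℂ) 1} := by
    have heq : {M : Matrix (Fin d) (Fin d) ℂ | ∀ i j, M i j ∈ Metric.closedBall (0:ℂ) 1}
        = Set.pi Set.univ (fun _i : Fin d =>
            Set.pi Set.univ (fun _j : Fin d => Metric.closedBall (0:ℂ) 1)) := by
      ext M
      simp only [Set.mem_setOf_eq, Set.mem_univ_pi, Metric.mem_closedBall, dist_zero_right]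
      exact ⟨fun h i _ j _ => by simpa using h i j,
        fun h i j => by simpa using h i (Set.mem_univ i) j (Set.mem_univ j)⟩
    rw [heq]
    exact isCompact_univ_pi fun i => isCompact_univ_pi fun j => isCompact_closedBall _ _
  have hC : IsClosed ((Matrix.unitaryGroup (Fin d) ℂ : Set (Matrix (Fin d) (Fin d) ℂ))) := by
    have heq : (Matrix.unitaryGroup (Fin d) ℂ : Set (Matrix (Fin d) (Fin d) ℂ)) =
        (fun M : Matrix (Fin d) (Fin d) ℂ => (star M * M, M * star M)) ⁻¹'
          {((1 : Matrix (Fin d) (Fin d) ℂ), (1 : Matrix (Fin d) (Fin d) ℂ))} := by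
      ext M
      simp only [Set.mem_preimage, Set.mem_singleton_iff, Prod.mk.injEq, SetLike.mem_coe]
      exact Unitary.mem_iff
    rw [heq]
    exact IsClosed.preimage (((continuous_id.matrix_conjTranspose.matrix_mul continuous_id).prodMk
      (continuous_id.matrix_mul continuous_id.matrix_conjTranspose))) isClosed_singleton
  refine hS.of_isClosed_subset hC ?_
  intro M hM i j
  have h1 : (star M * M) j j = 1 := by
    have h := (Unitary.mem_iff.mp hM).1
    rw [h]; simp [Matrix.one_apply]
  have h2 : ∑ k, Complex.normSq (M k j) = 1 := by
    have h3 : (star M * M) j j = ∑ k, (starRingEnd ℂ) (M k j) * M k j := by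
      simp [Matrix.mul_apply, Matrix.star_apply, mul_comm]
    rw [h3] at h1
    have := congrArg Complex.re h1
    simpa [Complex.normSq, Complex.mul_re, Complex.conj_re, Complex.conj_im] using this
  have h4 : Complex.normSq (M i j) ≤ 1 := by
    rw [← h2]
    exact Finset.single_le_sum (f := fun k => Complex.normSq (M k j))
      (fun k _ => Complex.normSq_nonneg _) (Finset.mem_univ i)
  simp only [Metric.mem_closedBall, dist_zero_right]
  have h5 : ‖M i j‖ ^ 2 ≤ 1 := by rwa [← Complex.sq_norm] at h4
  nlinarith [norm_nonneg (M i j)]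

instance : CompactSpace (Matrix.unitaryGroup (Fin d) ℂ) :=
  isCompact_iff_compactSpace.mp (isCompact_unitaryGroup d)

instance : MeasurableMul (Matrix.unitaryGroup (Fin d) ℂ) := by
  constructor
  · intro c
    have h : Continuous fun x : Matrix.unitaryGroup (Fin d) ℂ => c * x := by
      apply Continuous.subtype_mk
      show Continuous fun x : Matrix.unitaryGroup (Fin d) ℂ =>
        ((c : Matrix (Fin d) (Fin d) ℂ) * (x : Matrix (Fin d) (Fin d) ℂ))
      exact continuous_const.matrix_mul continuous_subtype_val
    exact h.measurable
  · intro c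
    have h : Continuous fun x : Matrix.unitaryGroup (Fin d) ℂ => x * c := by
      apply Continuous.subtype_mk
      show Continuous fun x : Matrix.unitaryGroup (Fin d) ℂ =>
        ((x : Matrix (Fin d) (Fin d) ℂ) * (c : Matrix (Fin d) (Fin d) ℂ))
      exact continuous_subtype_val.matrix_mul continuous_const
    exact h.measurable

theorem kron_conjT (A B : Matrix (Fin d) (Fin d) ℂ) : (A ⊗ₖ B)ᴴ = Aᴴ ⊗ₖ Bᴴ := by
  ext p q
  simp [Matrix.conjTranspose_apply, Matrix.kroneckerMap_apply, star_mul']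

theorem cont_kron2 : Continuous fun W : Matrix.unitaryGroup (Fin d) ℂ =>
    ((W : Matrix (Fin d) (Fin d) ℂ) ⊗ₖ (W : Matrix (Fin d) (Fin d) ℂ)) := by
  apply continuous_matrix
  rintro ⟨i, j⟩ ⟨k, l⟩
  exact (continuous_subtype_val.matrix_elem i k).mul (continuous_subtype_val.matrix_elem j l)

theorem integrable_of_cont {d : ℕ} (μ : Measure (Matrix.unitaryGroup (Fin d) ℂ))
    [IsProbabilityMeasure μ] {f : Matrix.unitaryGroup (Fin d) ℂ → ℂ} (hf : Continuous f) :
    Integrable f μ :=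
  hf.integrable_of_hasCompactSupport (HasCompactSupport.of_compactSpace f)

/-- entrywise integral of a matrix-valued function -/
noncomputable def intK (μ : Measure (Matrix.unitaryGroup (Fin d) ℂ))
    (f : Matrix.unitaryGroup (Fin d) ℂ → Matrix (Fin d × Fin d) (Fin d × Fin d) ℂ) :
    Matrix (Fin d × Fin d) (Fin d × Fin d) ℂ :=
  Matrix.of fun p q => ∫ W, f W p q ∂μ

theorem intK_mul (μ : Measure (Matrix.unitaryGroup (Fin d) ℂ)) [IsProbabilityMeasure μ]
    {f : Matrix.unitaryGroup (Fin d) ℂ → Matrix (Fin d × Fin d) (Fin d × Fin d) ℂ}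
    (hf : Continuous f) (P Q : Matrix (Fin d × Fin d) (Fin d × Fin d) ℂ) :
    P * intK μ f * Q = intK μ (fun W => P * f W * Q) := by
  ext p q
  show (P * intK μ f * Q) p q = ∫ W, (P * f W * Q) p q ∂μ
  have hent : ∀ (W : Matrix.unitaryGroup (Fin d) ℂ), (P * f W * Q) p q
      = ∑ s, ∑ r, P p r * f W r s * Q s q := by
    intro W
    simp only [Matrix.mul_apply, Finset.sum_mul]
  have hcont : ∀ r s, Continuous fun W => P p r * f W r s * Q s q := fun r s =>
    ((continuous_const.mul (hf.matrix_elem r s)).mul continuous_const)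
  calc (P * intK μ f * Q) p q
      = ∑ s, ∑ r, P p r * (∫ W, f W r s ∂μ) * Q s q := by
        simp only [Matrix.mul_apply, intK, Matrix.of_apply, Finset.sum_mul]
    _ = ∑ s, ∑ r, ∫ W, P p r * f W r s * Q s q ∂μ := by
        refine Finset.sum_congr rfl fun s _ => Finset.sum_congr rfl fun r _ => ?_
        rw [MeasureTheory.integral_mul_const, MeasureTheory.integral_const_mul]
    _ = ∑ s, ∫ W, ∑ r, P p r * f W r s * Q s q ∂μ := by
        refine Finset.sum_congr rfl fun s _ => ?_
        rw [← MeasureTheory.integral_finset_sum]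
        exact fun r _ => integrable_of_cont μ (hcont r s)
    _ = ∫ W, ∑ s, ∑ r, P p r * f W r s * Q s q ∂μ := by
        rw [← MeasureTheory.integral_finset_sum]
        exact fun s _ => MeasureTheory.integrable_finset_sum _
          (fun r _ => integrable_of_cont μ (hcont r s))
    _ = ∫ W, (P * f W * Q) p q ∂μ := by
        refine MeasureTheory.integral_congr_ae (Filter.Eventually.of_forall fun W => ?_)
        exact (hent W).symm

theorem trace_intK (μ : Measure (Matrix.unitaryGroup (Fin d) ℂ)) [IsProbabilityMeasure μ]
    {f : Matrix.unitaryGroup (Fin d) ℂ → Matrix (Fin d × Fin d) (Fin d × Fin d) ℂ}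
    (hf : Continuous f) :
    (intK μ f).trace = ∫ W, (f W).trace ∂μ := by
  rw [Matrix.trace]
  simp only [Matrix.diag, intK, Matrix.of_apply]
  rw [← MeasureTheory.integral_finset_sum]
  · rfl
  · exact fun p _ => integrable_of_cont μ (hf.matrix_elem p p)

end Hm2

open Hm2 in
theorem Hm2_haar_main (d : ℕ) (hd : 2 ≤ d)
    (μ : Measure (Matrix.unitaryGroup (Fin d) ℂ))
    [μ.IsHaarMeasure] [IsProbabilityMeasure μ]
    (A B C D : Matrix (Fin d) (Fin d) ℂ) :
    ∫ W : Matrix.unitaryGroup (Fin d) ℂ,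
        ((W : Matrix (Fin d) (Fin d) ℂ) * A * (W : Matrix (Fin d) (Fin d) ℂ)ᴴ * B).trace *
        ((W : Matrix (Fin d) (Fin d) ℂ) * C * (W : Matrix (Fin d) (Fin d) ℂ)ᴴ * D).trace ∂μ
      = (1 / ((d : ℂ) ^ 2 - 1)) *
          ((A * C).trace * (B * D).trace + A.trace * B.trace * C.trace * D.trace)
        - (1 / ((d : ℂ) * ((d : ℂ) ^ 2 - 1))) *
          (A.trace * C.trace * (B * D).trace + (A * C).trace * B.trace * D.trace) := by
  classical
  set X : Matrix (Fin d × Fin d) (Fin d × Fin d) ℂ := A ⊗ₖ C with hX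
  set f : Matrix.unitaryGroup (Fin d) ℂ → Matrix (Fin d × Fin d) (Fin d × Fin d) ℂ := fun W =>
    ((W : Matrix (Fin d) (Fin d) ℂ) ⊗ₖ (W : Matrix (Fin d) (Fin d) ℂ)) * X *
    ((W : Matrix (Fin d) (Fin d) ℂ) ⊗ₖ (W : Matrix (Fin d) (Fin d) ℂ))ᴴ with hf
  have hfc : Continuous f :=
    (cont_kron2.matrix_mul continuous_const).matrix_mul cont_kron2.matrix_conjTranspose
  set Φ : Matrix (Fin d × Fin d) (Fin d × Fin d) ℂ := intK μ f with hΦ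
  have hU2 : ∀ W : Matrix.unitaryGroup (Fin d) ℂ,
      ((W : Matrix (Fin d) (Fin d) ℂ) ⊗ₖ (W : Matrix (Fin d) (Fin d) ℂ))ᴴ *
        ((W : Matrix (Fin d) (Fin d) ℂ) ⊗ₖ (W : Matrix (Fin d) (Fin d) ℂ)) = 1 := by
    intro W
    rw [kron_conjT, ← Matrix.mul_kronecker_mul]
    have h := Matrix.mem_unitaryGroup_iff'.mp W.2
    rw [Matrix.star_eq_conjTranspose] at h
    rw [h, Matrix.one_kronecker_one]
  have hcomm : ∀ V : Matrix.unitaryGroup (Fin d) ℂ,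
      ((V : Matrix (Fin d) (Fin d) ℂ) ⊗ₖ (V : Matrix (Fin d) (Fin d) ℂ)) * Φ
        = Φ * ((V : Matrix (Fin d) (Fin d) ℂ) ⊗ₖ (V : Matrix (Fin d) (Fin d) ℂ)) := by
    intro V
    have hinv : ((V : Matrix (Fin d) (Fin d) ℂ) ⊗ₖ (V : Matrix (Fin d) (Fin d) ℂ)) * Φ *
        ((V : Matrix (Fin d) (Fin d) ℂ) ⊗ₖ (V : Matrix (Fin d) (Fin d) ℂ))ᴴ = Φ := by
      rw [hΦ, intK_mul μ hfc]
      have hcongr : (fun W => ((V : Matrix (Fin d) (Fin d) ℂ) ⊗ₖ (V : Matrix (Fin d) (Fin d) ℂ))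
          * f W * ((V : Matrix (Fin d) (Fin d) ℂ) ⊗ₖ (V : Matrix (Fin d) (Fin d) ℂ))ᴴ)
          = fun W => f (V * W) := by
        funext W
        have hcoe : ((V * W : Matrix.unitaryGroup (Fin d) ℂ) : Matrix (Fin d) (Fin d) ℂ)
            = (V : Matrix (Fin d) (Fin d) ℂ) * (W : Matrix (Fin d) (Fin d) ℂ) := rfl
        simp only [hf, hcoe]
        rw [Matrix.mul_kronecker_mul, Matrix.conjTranspose_mul]
        simp only [mul_assoc]
      rw [hcongr]
      ext p q
      show (∫ W, f (V * W) p q ∂μ) = ∫ W, f W p q ∂μ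
      exact MeasureTheory.integral_mul_left_eq_self (fun W => f W p q) V
    calc ((V : Matrix (Fin d) (Fin d) ℂ) ⊗ₖ (V : Matrix (Fin d) (Fin d) ℂ)) * Φ
        = ((V : Matrix (Fin d) (Fin d) ℂ) ⊗ₖ (V : Matrix (Fin d) (Fin d) ℂ)) * Φ *
          (((V : Matrix (Fin d) (Fin d) ℂ) ⊗ₖ (V : Matrix (Fin d) (Fin d) ℂ))ᴴ *
            ((V : Matrix (Fin d) (Fin d) ℂ) ⊗ₖ (V : Matrix (Fin d) (Fin d) ℂ))) := by
          rw [hU2 V, mul_one]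
      _ = (((V : Matrix (Fin d) (Fin d) ℂ) ⊗ₖ (V : Matrix (Fin d) (Fin d) ℂ)) * Φ *
          ((V : Matrix (Fin d) (Fin d) ℂ) ⊗ₖ (V : Matrix (Fin d) (Fin d) ℂ))ᴴ) *
          ((V : Matrix (Fin d) (Fin d) ℂ) ⊗ₖ (V : Matrix (Fin d) (Fin d) ℂ)) := by
          simp only [mul_assoc]
      _ = Φ * ((V : Matrix (Fin d) (Fin d) ℂ) ⊗ₖ (V : Matrix (Fin d) (Fin d) ℂ)) := by
          rw [hinv]
  obtain ⟨a, b, hstruct⟩ : ∃ a b : ℂ, Φ = a • 1 + b • FM d :=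
    ⟨_, _, structure_thm hd Φ hcomm⟩
  -- trace equations
  have htrf : ∀ W : Matrix.unitaryGroup (Fin d) ℂ, (f W).trace = X.trace := by
    intro W
    simp only [hf]
    rw [Matrix.trace_mul_comm, ← mul_assoc, hU2 W, one_mul]
  have htr1 : Φ.trace = X.trace := by
    rw [hΦ, trace_intK μ hfc,
      MeasureTheory.integral_congr_ae (Filter.Eventually.of_forall htrf),
      MeasureTheory.integral_const]
    simp [measure_univ]
  have htrF : ∀ W : Matrix.unitaryGroup (Fin d) ℂ,
      (FM d * f W * 1).trace = (FM d * X).trace := by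
    intro W
    rw [mul_one]
    simp only [hf]
    rw [← mul_assoc, ← mul_assoc, FM_mul_kron, Matrix.trace_mul_comm,
      ← mul_assoc, ← mul_assoc, hU2 W, one_mul]
  have htr2 : (FM d * Φ).trace = (FM d * X).trace := by
    have h := intK_mul μ hfc (FM d) 1
    rw [mul_one] at h
    rw [hΦ, h, trace_intK μ ((continuous_const.matrix_mul hfc).matrix_mul continuous_const),
      MeasureTheory.integral_congr_ae (Filter.Eventually.of_forall htrF),
      MeasureTheory.integral_const]
    simp [measure_univ]
  have eq1 : a * (d : ℂ) ^ 2 + b * (d : ℂ) = A.trace * C.trace := by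
    have h := htr1
    rw [hstruct, Matrix.trace_add, Matrix.trace_smul, Matrix.trace_smul, Matrix.trace_one,
      trace_FM, hX, Matrix.trace_kronecker] at h
    rw [← h]
    simp only [smul_eq_mul, Fintype.card_prod, Fintype.card_fin]
    push_cast
    ring
  have eq2 : a * (d : ℂ) + b * (d : ℂ) ^ 2 = (A * C).trace := by
    have h := htr2
    rw [hstruct, mul_add, Matrix.mul_smul, Matrix.mul_smul, mul_one, FM_mul_FM,
      Matrix.trace_add, Matrix.trace_smul, Matrix.trace_smul, Matrix.trace_one, trace_FM,
      hX, trace_FM_mul] at h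
    rw [← h]
    simp only [smul_eq_mul, Fintype.card_prod, Fintype.card_fin]
    push_cast
    ring
  -- the integral equals trace (Φ * (B ⊗ₖ D))
  have hpt : ∀ W : Matrix.unitaryGroup (Fin d) ℂ,
      ((W : Matrix (Fin d) (Fin d) ℂ) * A * (W : Matrix (Fin d) (Fin d) ℂ)ᴴ * B).trace *
        ((W : Matrix (Fin d) (Fin d) ℂ) * C * (W : Matrix (Fin d) (Fin d) ℂ)ᴴ * D).trace
      = (1 * f W * (B ⊗ₖ D)).trace := by
    intro W
    rw [one_mul, ← Matrix.trace_kronecker]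
    congr 1
    simp only [hf, hX]
    rw [Matrix.mul_kronecker_mul, Matrix.mul_kronecker_mul, Matrix.mul_kronecker_mul, kron_conjT]
  have hmain : (∫ W : Matrix.unitaryGroup (Fin d) ℂ,
      ((W : Matrix (Fin d) (Fin d) ℂ) * A * (W : Matrix (Fin d) (Fin d) ℂ)ᴴ * B).trace *
      ((W : Matrix (Fin d) (Fin d) ℂ) * C * (W : Matrix (Fin d) (Fin d) ℂ)ᴴ * D).trace ∂μ)
      = (1 * Φ * (B ⊗ₖ D)).trace := by
    rw [hΦ, intK_mul μ hfc 1 (B ⊗ₖ D),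
      trace_intK μ ((continuous_const.matrix_mul hfc).matrix_mul continuous_const)]
    exact MeasureTheory.integral_congr_ae (Filter.Eventually.of_forall hpt)
  rw [hmain, one_mul, hstruct, Matrix.add_mul, Matrix.smul_mul, Matrix.smul_mul, one_mul,
    Matrix.trace_add, Matrix.trace_smul, Matrix.trace_smul, Matrix.trace_kronecker,
    trace_FM_mul]
  simp only [smul_eq_mul]
  -- solve for a and b
  have hδ : (d : ℂ) ≠ 0 := by
    exact_mod_cast Nat.cast_ne_zero.mpr (by omega)
  have hδ2 : (d : ℂ) ^ 2 - 1 ≠ 0 := by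
    intro h
    rw [sub_eq_zero] at h
    have h' : ((d ^ 2 : ℕ) : ℂ) = ((1 : ℕ) : ℂ) := by push_cast; rw [h]
    have h2 := Nat.cast_inj (R := ℂ) |>.mp h'
    have h3 : 2 ^ 2 ≤ d ^ 2 := Nat.pow_le_pow_left hd 2
    omega
  have ha : a = ((d : ℂ) * (A.trace * C.trace) - (A * C).trace) / ((d : ℂ) * ((d : ℂ) ^ 2 - 1)) := by
    field_simp
    linear_combination (d : ℂ) * eq1 - eq2
  have hb : b = ((d : ℂ) * (A * C).trace - A.trace * C.trace) / ((d : ℂ) * ((d : ℂ) ^ 2 - 1)) := by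
    field_simp
    linear_combination (d : ℂ) * eq2 - eq1
  rw [ha, hb]
  field_simp
  ring

/-- **Second moment of Haar-random conjugation.**
Let `d ≥ 2` and let `μ` be the Haar probability measure on the unitary group `U(d)`.
Then for all `A B C D ∈ M_d(ℂ)`,
`∫ Tr[W A W† B]·Tr[W C W† D] dμ(W)
  = (1/(d²−1))·(Tr[AC]·Tr[BD] + Tr[A]·Tr[B]·Tr[C]·Tr[D])
    − (1/(d(d²−1)))·(Tr[A]·Tr[C]·Tr[BD] + Tr[AC]·Tr[B]·Tr[D])`. -/
theorem haar_integral_trace_conj_sq (d : ℕ) (hd : 2 ≤ d)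
    (μ : Measure (Matrix.unitaryGroup (Fin d) ℂ))
    [μ.IsHaarMeasure] [IsProbabilityMeasure μ]
    (A B C D : Matrix (Fin d) (Fin d) ℂ) :
    ∫ W : Matrix.unitaryGroup (Fin d) ℂ,
        ((W : Matrix (Fin d) (Fin d) ℂ) * A * (W : Matrix (Fin d) (Fin d) ℂ)ᴴ * B).trace *
        ((W : Matrix (Fin d) (Fin d) ℂ) * C * (W : Matrix (Fin d) (Fin d) ℂ)ᴴ * D).trace ∂μ
      = (1 / ((d : ℂ) ^ 2 - 1)) *
          ((A * C).trace * (B * D).trace + A.trace * B.trace * C.trace * D.trace)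
        - (1 / ((d : ℂ) * ((d : ℂ) ^ 2 - 1))) *
          (A.trace * C.trace * (B * D).trace + (A * C).trace * B.trace * D.trace) :=
  Hm2_haar_main d hd μ A B C D
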